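/- Let G be a connected k-regular finite simple graph on n vertices, where k ≥ 1 is odd. Then G is (nk/2 − 1)-approximately magic; that is, there exists a bijection f from the edge set of G to {1, 2, ..., nk/2} such that the difference between the largest vertex sum and the smallest vertex sum is at most nk/2 − 1. -/

import Mathlib

/-- The vertex sum at `v` under an edge labeling `f`: the sum of the labels of all
edges incident with `v`. -/
noncomputable def vertexSum {V : Type*} [Finite V] (G : SimpleGraph V)
    (f : Sym2 V → ℕ) (v : V) : ℕ :=
  ∑ e ∈ (G.incidenceSet v).toFinite.toFinset, f e

/-- A graph is antimagic if there is a bijection from its edge set to `{1, ..., m}`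
(`m` = number of edges) such that all vertex sums are pairwise distinct. -/
def IsAntimagic {V : Type*} [Finite V] (G : SimpleGraph V) : Prop :=
  ∃ f : Sym2 V → ℕ,
    Set.BijOn f G.edgeSet (Set.Icc 1 (Nat.card G.edgeSet)) ∧
    ∀ u v : V, u ≠ v → vertexSum G f u ≠ vertexSum G f v

namespace AMagic

def snake (m : ℕ) : ℕ → ℕ → Bool → ℕ → List ℕ
  | _, _, _, 0 => []
  | lam, hi, true, (r+1) => (m - hi) :: snake m lam (hi+1) false r
  | lam, hi, false, (r+1) => (lam + 1) :: snake m (lam+1) hi true r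

def lowsC (sh : Bool) (r : ℕ) : ℕ := if sh then r / 2 else (r + 1) / 2
def highsC (sh : Bool) (r : ℕ) : ℕ := if sh then (r + 1) / 2 else r / 2

lemma lowsC_true (r : ℕ) : lowsC true r = r / 2 := rfl
lemma lowsC_false (r : ℕ) : lowsC false r = (r+1) / 2 := rfl
lemma highsC_true (r : ℕ) : highsC true r = (r+1) / 2 := rfl
lemma highsC_false (r : ℕ) : highsC false r = r / 2 := rfl

lemma lowsC_add_highsC (sh : Bool) (r : ℕ) : lowsC sh r + highsC sh r = r := by
  cases sh <;> simp [lowsC, highsC] <;> omega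

@[simp] lemma snake_length (m : ℕ) : ∀ (r lam hi : ℕ) (sh : Bool),
    (snake m lam hi sh r).length = r := by
  intro r
  induction r with
  | zero => intro lam hi sh; cases sh <;> rfl
  | succ r ih => intro lam hi sh; cases sh <;> simp [snake, ih]

lemma map_range_succ_left (f : ℕ → ℕ) (p : ℕ) :
    (Multiset.range (p+1)).map f = f 0 ::ₘ (Multiset.range p).map (fun j => f (j+1)) := by
  have h : List.range (p+1) = 0 :: (List.range p).map (· + 1) := List.range_succ_eq_map (n := p)
  have : (Multiset.range (p+1)) = ((0 :: (List.range p).map (· + 1) : List ℕ) : Multiset ℕ) := by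
    rw [Multiset.range, h]
  rw [this]
  simp [Multiset.range]
  rfl

lemma snake_coe (m : ℕ) : ∀ (r lam hi : ℕ) (sh : Bool),
    (↑(snake m lam hi sh r) : Multiset ℕ) =
      (Multiset.range (lowsC sh r)).map (fun j => lam + 1 + j)
      + (Multiset.range (highsC sh r)).map (fun j => m - hi - j) := by
  intro r
  induction r with
  | zero =>
    intro lam hi sh
    cases sh <;> simp [snake, lowsC, highsC]
  | succ r ih =>
    intro lam hi sh
    cases sh
    · -- low emitted
      have h1 : lowsC false (r+1) = lowsC true r + 1 := by
        rw [lowsC_false, lowsC_true]; omega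
      have h2 : highsC false (r+1) = highsC true r := rfl
      rw [h1, h2]
      calc (↑(snake m lam hi false (r+1)) : Multiset ℕ)
          = (lam + 1) ::ₘ ↑(snake m (lam+1) hi true r) := by
            rw [show snake m lam hi false (r+1) = (lam+1) :: snake m (lam+1) hi true r from rfl]
            simp
        _ = (lam + 1) ::ₘ ((Multiset.range (lowsC true r)).map (fun j => lam + 1 + 1 + j)
              + (Multiset.range (highsC true r)).map (fun j => m - hi - j)) := by rw [ih]
        _ = ((lam + 1) ::ₘ (Multiset.range (lowsC true r)).map (fun j => lam + 1 + 1 + j))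
              + (Multiset.range (highsC true r)).map (fun j => m - hi - j) := by
            rw [Multiset.cons_add]
        _ = (Multiset.range (lowsC true r + 1)).map (fun j => lam + 1 + j)
              + (Multiset.range (highsC true r)).map (fun j => m - hi - j) := by
            rw [map_range_succ_left (fun j => lam + 1 + j) (lowsC true r)]
            congr 1
            · congr 1
              apply Multiset.map_congr rfl
              intro x _; omega
    · -- high emitted
      have h1 : lowsC true (r+1) = lowsC false r := rfl
      have h2 : highsC true (r+1) = highsC false r + 1 := by
        rw [highsC_true, highsC_false]; omega
      rw [h1, h2]
      calc (↑(snake m lam hi true (r+1)) : Multiset ℕ)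
          = (m - hi) ::ₘ ↑(snake m lam (hi+1) false r) := by
            rw [show snake m lam hi true (r+1) = (m - hi) :: snake m lam (hi+1) false r from rfl]
            simp
        _ = (m - hi) ::ₘ ((Multiset.range (lowsC false r)).map (fun j => lam + 1 + j)
              + (Multiset.range (highsC false r)).map (fun j => m - (hi+1) - j)) := by rw [ih]
        _ = (Multiset.range (lowsC false r)).map (fun j => lam + 1 + j)
              + ((m - hi) ::ₘ (Multiset.range (highsC false r)).map (fun j => m - (hi+1) - j)) := by
            rw [Multiset.add_cons]
        _ = (Multiset.range (lowsC false r)).map (fun j => lam + 1 + j)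
              + (Multiset.range (highsC false r + 1)).map (fun j => m - hi - j) := by
            rw [map_range_succ_left (fun j => m - hi - j) (highsC false r)]
            congr 2
            apply Multiset.map_congr rfl
            intro x _; omega

lemma snake_chain (m : ℕ) : ∀ (r lam hi : ℕ) (sh : Bool),
    (sh = true → hi = lam) → (sh = false → hi = lam + 1) → lam + hi + r ≤ m →
    List.Chain' (fun x y => x + y = m ∨ x + y = m + 1) (snake m lam hi sh r) := by
  intro r
  induction r using Nat.strong_induction_on with
  | _ r ih =>
    intro lam hi sh ht hf hle
    rcases r with _ | r
    · cases sh <;> simp [snake, List.Chain', List.isChain_singleton]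
    rcases r with _ | r
    · cases sh <;> simp [snake, List.Chain', List.isChain_singleton]
    cases sh
    · have hhi : hi = lam + 1 := hf rfl
      rw [show snake m lam hi false (r+1+1) = (lam+1) :: snake m (lam+1) hi true (r+1) from rfl]
      have hc : List.Chain' (fun x y => x + y = m ∨ x + y = m + 1)
          (snake m (lam+1) hi true (r+1)) := by
        apply ih (r+1) (by omega)
        · intro _; omega
        · intro h; simp at h
        · omega
      rw [show snake m (lam+1) hi true (r+1) = (m - hi) :: snake m (lam+1) (hi+1) false r from rfl]
        at hc ⊢
      refine List.IsChain.cons_cons ?_ hc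
      left; omega
    · have hhi : hi = lam := ht rfl
      rw [show snake m lam hi true (r+1+1) = (m - hi) :: snake m lam (hi+1) false (r+1) from rfl]
      have hc : List.Chain' (fun x y => x + y = m ∨ x + y = m + 1)
          (snake m lam (hi+1) false (r+1)) := by
        apply ih (r+1) (by omega)
        · intro h; simp at h
        · intro _; omega
        · omega
      rw [show snake m lam (hi+1) false (r+1) = (lam+1) :: snake m (lam+1) (hi+1) true r from rfl]
        at hc ⊢
      refine List.IsChain.cons_cons ?_ hc
      right; omega

lemma getLastD_cons_of_ne_nil {l : List ℕ} (h : l ≠ []) (a d : ℕ) :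
    (a :: l).getLastD d = l.getLastD d := by
  cases l with
  | nil => exact absurd rfl h
  | cons b t => rfl

lemma snake_last (m : ℕ) : ∀ (r lam hi : ℕ) (sh : Bool), 0 < r →
    (snake m lam hi sh r).getLastD 0 =
      if (r % 2 = 1) ↔ (sh = true) then m - hi - (highsC sh r - 1) else lam + lowsC sh r := by
  intro r
  induction r using Nat.strong_induction_on with
  | _ r ih =>
    intro lam hi sh hr
    rcases r with _ | r
    · omega
    rcases r with _ | r
    · cases sh <;> simp [snake, lowsC, highsC]
    have hne : ∀ (lam' hi' : ℕ) (sh' : Bool), snake m lam' hi' sh' (r+1) ≠ [] := by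
      intro lam' hi' sh' h
      have := snake_length m (r+1) lam' hi' sh'
      rw [h] at this; simp at this
    cases sh
    · rw [show snake m lam hi false (r+1+1) = (lam+1) :: snake m (lam+1) hi true (r+1) from rfl]
      rw [getLastD_cons_of_ne_nil (hne _ _ _)]
      rw [ih (r+1) (by omega) (lam+1) hi true (by omega)]
      by_cases hpar : r % 2 = 0
      · rw [if_pos (show ((r+1) % 2 = 1) ↔ ((true : Bool) = true) by simp; omega),
            if_pos (show ((r+1+1) % 2 = 1) ↔ ((false : Bool) = true) by simp; omega)]
        rw [highsC_true, highsC_false]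
      · rw [if_neg (show ¬(((r+1) % 2 = 1) ↔ ((true : Bool) = true)) by simp; omega),
            if_neg (show ¬(((r+1+1) % 2 = 1) ↔ ((false : Bool) = true)) by simp; omega)]
        rw [lowsC_true, lowsC_false]; omega
    · rw [show snake m lam hi true (r+1+1) = (m - hi) :: snake m lam (hi+1) false (r+1) from rfl]
      rw [getLastD_cons_of_ne_nil (hne _ _ _)]
      rw [ih (r+1) (by omega) lam (hi+1) false (by omega)]
      by_cases hpar : r % 2 = 0
      · rw [if_neg (show ¬(((r+1) % 2 = 1) ↔ ((false : Bool) = true)) by simp; omega),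
            if_neg (show ¬(((r+1+1) % 2 = 1) ↔ ((true : Bool) = true)) by simp; omega)]
        rw [lowsC_false, lowsC_true]
      · rw [if_pos (show ((r+1) % 2 = 1) ↔ ((false : Bool) = true) by simp; omega),
            if_pos (show ((r+1+1) % 2 = 1) ↔ ((true : Bool) = true) by simp; omega)]
        rw [highsC_false, highsC_true]; omega

def snakes (m : ℕ) : ℕ → ℕ → List ℕ → List (List ℕ)
  | _, _, [] => []
  | lam, hi, r :: rs =>
      snake m lam hi (lam == hi) r ::
        snakes m (lam + lowsC (lam == hi) r) (hi + highsC (lam == hi) r) rs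

lemma snakes_map_length (m : ℕ) : ∀ (rs : List ℕ) (lam hi : ℕ),
    (snakes m lam hi rs).map List.length = rs := by
  intro rs
  induction rs with
  | nil => intro lam hi; rfl
  | cons r rs ih => intro lam hi; simp [snakes, snake_length, ih]

lemma map_range_add (f : ℕ → ℕ) (a b : ℕ) :
    (Multiset.range (a + b)).map f
      = (Multiset.range a).map f + (Multiset.range b).map (fun j => f (a + j)) := by
  induction b with
  | zero => simp
  | succ b ih =>
    rw [show a + (b+1) = (a+b)+1 from rfl, Multiset.range_succ, Multiset.map_cons, ih,
      Multiset.range_succ, Multiset.map_cons, Multiset.add_cons]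

lemma map_range_rev (c Q : ℕ) (h : Q ≤ c) :
    (Multiset.range Q).map (fun j => c - j) = (Multiset.range Q).map (fun j => c - Q + 1 + j) := by
  induction Q with
  | zero => simp
  | succ Q ih =>
    rw [map_range_succ_left (fun j => c - (Q+1) + 1 + j) Q, Multiset.range_succ,
      Multiset.map_cons, ih (by omega)]
    congr 1
    · omega
    · apply Multiset.map_congr rfl
      intro x _; omega

lemma snakes_coe (m : ℕ) : ∀ (rs : List ℕ) (lam hi : ℕ),
    ∃ P Q, P + Q = rs.sum ∧
    ((snakes m lam hi rs).flatten : Multiset ℕ)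
      = (Multiset.range P).map (fun j => lam + 1 + j)
        + (Multiset.range Q).map (fun j => m - hi - j) := by
  intro rs
  induction rs with
  | nil => intro lam hi; exact ⟨0, 0, by simp, by simp [snakes]⟩
  | cons r rs ih =>
    intro lam hi
    obtain ⟨P, Q, hPQ, hcoe⟩ := ih (lam + lowsC (lam == hi) r) (hi + highsC (lam == hi) r)
    refine ⟨lowsC (lam == hi) r + P, highsC (lam == hi) r + Q, ?_, ?_⟩
    · have := lowsC_add_highsC (lam == hi) r
      simp only [List.sum_cons]; omega
    · have hfl : (snakes m lam hi (r :: rs)).flatten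
          = snake m lam hi (lam == hi) r
            ++ (snakes m (lam + lowsC (lam == hi) r) (hi + highsC (lam == hi) r) rs).flatten := by
        simp [snakes]
      rw [hfl, show (↑(snake m lam hi (lam == hi) r ++ (snakes m (lam + lowsC (lam == hi) r) (hi + highsC (lam == hi) r) rs).flatten) : Multiset ℕ) = ↑(snake m lam hi (lam == hi) r) + ↑(snakes m (lam + lowsC (lam == hi) r) (hi + highsC (lam == hi) r) rs).flatten from (Multiset.coe_add _ _).symm, snake_coe, hcoe,
        map_range_add (fun j => lam + 1 + j) (lowsC (lam == hi) r) P,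
        map_range_add (fun j => m - hi - j) (highsC (lam == hi) r) Q,
        add_add_add_comm]
      congr 1
      · congr 1
        apply Multiset.map_congr rfl
        intro x _; omega
      · congr 1
        apply Multiset.map_congr rfl
        intro x _; omega

lemma snakes_chain (m : ℕ) : ∀ (rs : List ℕ) (lam hi : ℕ),
    (hi = lam ∨ hi = lam + 1) → lam + hi + rs.sum ≤ m →
    ∀ l ∈ snakes m lam hi rs, List.Chain' (fun x y => x + y = m ∨ x + y = m + 1) l := by
  intro rs
  induction rs with
  | nil => intro lam hi _ _ l hl; simp [snakes] at hl
  | cons r rs ih =>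
    intro lam hi hinv hle l hl
    have hsum : lowsC (lam == hi) r + highsC (lam == hi) r = r := lowsC_add_highsC _ r
    rw [show snakes m lam hi (r :: rs)
        = snake m lam hi (lam == hi) r ::
          snakes m (lam + lowsC (lam == hi) r) (hi + highsC (lam == hi) r) rs from rfl,
      List.mem_cons] at hl
    rcases hl with hl | hl
    · subst hl
      apply snake_chain
      · intro hb
        have : lam = hi := by simpa using hb
        omega
      · intro hb
        have : ¬ (lam = hi) := by simpa using hb
        omega
      · simp only [List.sum_cons] at hle; omega
    · refine ih _ _ ?_ ?_ l hl
      · rcases hinv with h0 | h0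
        · have hb : (lam == hi) = true := by simpa using h0.symm
          rw [hb]
          rw [lowsC_true, highsC_true]
          omega
        · have hb : (lam == hi) = false := by
            simp only [beq_eq_false_iff_ne, ne_eq]; omega
          rw [hb, lowsC_false, highsC_false]
          omega
      · simp only [List.sum_cons] at hle
        omega

lemma headI_mem {l : List ℕ} (h : l ≠ []) : l.headI ∈ l := by
  cases l with
  | nil => exact absurd rfl h
  | cons a t => simp

lemma getLastD_mem {l : List ℕ} (h : l ≠ []) : l.getLastD 0 ∈ l := by
  induction l with
  | nil => exact absurd rfl h
  | cons a t ih =>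
    cases t with
    | nil => simp [List.getLastD]
    | cons b t2 =>
      rw [getLastD_cons_of_ne_nil (by simp)]
      exact List.mem_cons_of_mem a (ih (by simp))

/-- The packaged label-list construction. -/
lemma labels_pkg (m h r₁ : ℕ) (rs : List ℕ)
    (hsum : r₁ + rs.sum = m) (hpos : ∀ r ∈ rs, 1 ≤ r) (hr1pos : 1 ≤ r₁)
    (hr1 : 2*h + 1 ≤ r₁) :
    ∃ L : List (List ℕ),
      L.map List.length = r₁ :: rs ∧
      (↑L.flatten : Multiset ℕ) = (Multiset.range m).map (· + 1) ∧
      (∀ l ∈ L, List.Chain' (fun x y => x + y = m ∨ x + y = m + 1) l) ∧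
      (∀ l ∈ L, h + 1 ≤ l.headI ∧ l.headI ≤ m ∧ h + 1 ≤ l.getLastD 0 ∧ l.getLastD 0 ≤ m) := by
  classical
  refine ⟨snakes m 0 0 (r₁ :: rs), snakes_map_length m _ 0 0, ?_, ?_, ?_⟩
  · -- multiset statement
    obtain ⟨P, Q, hPQ, hcoe⟩ := snakes_coe m (r₁ :: rs) 0 0
    rw [hcoe]
    have hPQm : P + Q = m := by simp only [List.sum_cons] at hPQ; omega
    have hQ : (Multiset.range Q).map (fun j => m - 0 - j)
        = (Multiset.range Q).map (fun j => P + 1 + j) := by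
      have h1 : (Multiset.range Q).map (fun j => m - 0 - j)
          = (Multiset.range Q).map (fun j => m - j) := by
        apply Multiset.map_congr rfl; intro x _; omega
      rw [h1, map_range_rev m Q (by omega)]
      apply Multiset.map_congr rfl; intro x _; omega
    rw [hQ, ← hPQm, map_range_add (fun j => j + 1) P Q]
    congr 1
    · apply Multiset.map_congr rfl; intro x _; omega
    · apply Multiset.map_congr rfl; intro x _; omega
  · intro l hl
    exact snakes_chain m (r₁ :: rs) 0 0 (Or.inl rfl) (by simp only [List.sum_cons]; omega) l hl
  · -- head/last bounds
    intro l hl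
    have hm1 : 2*h + 1 ≤ m := by
      have : rs.sum ≥ 0 := Nat.zero_le _
      omega
    have hfirst : snakes m 0 0 (r₁ :: rs)
        = snake m 0 0 true r₁ :: snakes m (lowsC true r₁) (highsC true r₁) rs := by
      simp [snakes]
    rw [hfirst, List.mem_cons] at hl
    rcases hl with hl | hl
    · subst hl
      constructor
      · -- headI = m
        obtain ⟨r', rfl⟩ : ∃ r', r₁ = r' + 1 := ⟨r₁ - 1, by omega⟩
        rw [show snake m 0 0 true (r' + 1) = (m - 0) :: snake m 0 1 false r' from rfl]
        simp only [List.headI]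
        omega
      refine ⟨?_, ?_⟩
      · obtain ⟨r', rfl⟩ : ∃ r', r₁ = r' + 1 := ⟨r₁ - 1, by omega⟩
        rw [show snake m 0 0 true (r' + 1) = (m - 0) :: snake m 0 1 false r' from rfl]
        simp only [List.headI]
        omega
      · rw [snake_last m r₁ 0 0 true (by omega)]
        rw [highsC_true, lowsC_true]
        by_cases hodd : r₁ % 2 = 1
        · rw [if_pos (by simpa using hodd)]
          omega
        · rw [if_neg (by simpa using hodd)]
          omega
    · -- later trails: all entries are in [r₁/2 + 1, m]
      have hlen : l.length ∈ rs := by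
        have := snakes_map_length m rs (lowsC true r₁) (highsC true r₁)
        rw [← this]
        exact List.mem_map_of_mem hl
      have hlnn : l ≠ [] := by
        intro hnil
        have := hpos _ hlen
        rw [hnil] at this
        simp at this
      have hall : ∀ x ∈ l, r₁ / 2 + 1 ≤ x ∧ x ≤ m := by
        intro x hx
        obtain ⟨P, Q, hPQ, hcoe⟩ := snakes_coe m rs (lowsC true r₁) (highsC true r₁)
        have hxm : x ∈ (↑(snakes m (lowsC true r₁) (highsC true r₁) rs).flatten : Multiset ℕ) := by
          rw [Multiset.mem_coe]
          exact List.mem_flatten.2 ⟨l, hl, hx⟩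
        rw [hcoe] at hxm
        rw [Multiset.mem_add] at hxm
        have hrs : rs.sum = m - r₁ := by omega
        rw [lowsC_true, highsC_true] at *
        rcases hxm with hx1 | hx1
        · rw [Multiset.mem_map] at hx1
          obtain ⟨j, hj, rfl⟩ := hx1
          rw [Multiset.mem_range] at hj
          omega
        · rw [Multiset.mem_map] at hx1
          obtain ⟨j, hj, rfl⟩ := hx1
          rw [Multiset.mem_range] at hj
          omega
      have h1 := hall _ (headI_mem hlnn)
      have h2 := hall _ (getLastD_mem hlnn)
      exact ⟨by omega, by omega, by omega, by omega⟩

section WalkSum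

variable {V : Type} [DecidableEq V] {G : SimpleGraph V}

/-- Sum of labels (positionally assigned) of edges incident to `v`. -/
def vS (v : V) (es : List (Sym2 V)) (ls : List ℕ) : ℕ :=
  (((es.zip ls).filter (fun p => v ∈ p.1)).map Prod.snd).sum

/-- Number of (positional) edges incident to `v`. -/
def vC (v : V) (es : List (Sym2 V)) (ls : List ℕ) : ℕ :=
  ((es.zip ls).filter (fun p => v ∈ p.1)).length

@[simp] lemma vS_nil (v : V) (ls : List ℕ) : vS v [] ls = 0 := by simp [vS]
@[simp] lemma vC_nil (v : V) (ls : List ℕ) : vC v [] ls = 0 := by simp [vC]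

lemma vS_cons (v : V) (e : Sym2 V) (es : List (Sym2 V)) (l : ℕ) (ls : List ℕ) :
    vS v (e :: es) (l :: ls) = (if v ∈ e then l else 0) + vS v es ls := by
  by_cases hv : v ∈ e <;> simp [vS, List.filter_cons, hv]

lemma vC_cons (v : V) (e : Sym2 V) (es : List (Sym2 V)) (l : ℕ) (ls : List ℕ) :
    vC v (e :: es) (l :: ls) = (if v ∈ e then 1 else 0) + vC v es ls := by
  by_cases hv : v ∈ e <;> simp [vC, List.filter_cons, hv] <;> omega

lemma trail_vertex_sum (m h : ℕ) :
    ∀ {a b : V} (w : G.Walk a b) (ls : List ℕ),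
      ls.length = w.length →
      List.Chain' (fun x y => x + y = m ∨ x + y = m + 1) ls →
      (ls ≠ [] → h + 1 ≤ ls.getLastD 0 ∧ ls.getLastD 0 ≤ m) →
      ∀ v : V,
        (v ≠ a → v ≠ b → ∃ c, vC v w.edges ls = 2*c ∧
          m*c ≤ vS v w.edges ls ∧ vS v w.edges ls ≤ (m+1)*c) ∧
        (v = a → v ≠ b → ∃ c, vC v w.edges ls = 2*c+1 ∧
          m*c + ls.headI ≤ vS v w.edges ls ∧ vS v w.edges ls ≤ (m+1)*c + ls.headI) ∧
        (v ≠ a → v = b → ∃ c, vC v w.edges ls = 2*c+1 ∧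
          m*c + (h+1) ≤ vS v w.edges ls ∧ vS v w.edges ls ≤ (m+1)*c + m) ∧
        (v = a → v = b → (ls = [] ∧ vS v w.edges ls = 0 ∧ vC v w.edges ls = 0) ∨
          ∃ c, vC v w.edges ls = 2*c+2 ∧
            m*c + ls.headI + (h+1) ≤ vS v w.edges ls ∧
            vS v w.edges ls ≤ (m+1)*c + ls.headI + m) := by
  intro a b w
  induction w with
  | nil =>
    intro ls hlen _ _ v
    have hnil : ls = [] := by
      simpa using hlen
    subst hnil
    refine ⟨?_, ?_, ?_, ?_⟩
    · intro _ _; exact ⟨0, by simp⟩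
    · intro h1 h2; exact absurd rfl (by rw [h1] at h2; exact h2)
    · intro h1 h2; exact absurd rfl (by rw [h2] at h1; exact h1)
    · intro _ _; left; simp
  | @cons u v' b hadj w' ih =>
    intro ls hlen hchain hlast v
    obtain ⟨l₀, ls', rfl⟩ : ∃ l₀ ls', ls = l₀ :: ls' := by
      cases ls with
      | nil => simp at hlen
      | cons x t => exact ⟨x, t, rfl⟩
    have huv' : u ≠ v' := hadj.ne
    have hedges : (SimpleGraph.Walk.cons hadj w').edges = s(u, v') :: w'.edges := rfl
    have hlen' : ls'.length = w'.length := by simpa using hlen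
    by_cases hempty : ls' = []
    · -- w' is nil
      subst hempty
      have hw'len : w'.length = 0 := by simpa using hlen'.symm
      cases w' with
      | nil =>
        -- b = v'
        have hmem : ∀ x, x ∈ s(u, v') ↔ (x = u ∨ x = v') := by
          intro x; exact Sym2.mem_iff
        have hl₀ := hlast (by simp)
        rw [show ([l₀] : List ℕ).getLastD 0 = l₀ from rfl] at hl₀
        refine ⟨?_, ?_, ?_, ?_⟩
        · intro h1 h2
          refine ⟨0, ?_, ?_, ?_⟩ <;>
            simp [hedges, vC_cons, vS_cons, hmem, h1, h2]
        · intro h1 h2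
          subst h1
          refine ⟨0, ?_, ?_, ?_⟩ <;>
            simp [hedges, vC_cons, vS_cons, hmem] <;> omega
        · intro h1 h2
          subst h2
          refine ⟨0, ?_, ?_, ?_⟩ <;>
            simp [hedges, vC_cons, vS_cons, hmem, Ne.symm h1] <;> omega
        · intro h1 h2
          exact absurd (h1.symm.trans h2) huv'
      | cons adj2 w2 => simp at hw'len
    · -- ls' nonempty
      obtain ⟨l₁, ls'', rfl⟩ : ∃ l₁ ls'', ls' = l₁ :: ls'' := by
        cases ls' with
        | nil => exact absurd rfl hempty
        | cons x t => exact ⟨x, t, rfl⟩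
      have hrel : l₀ + l₁ = m ∨ l₀ + l₁ = m + 1 := (List.isChain_cons_cons.1 hchain).1
      have hchain' : List.Chain' (fun x y => x + y = m ∨ x + y = m + 1) (l₁ :: ls'') :=
        (List.isChain_cons_cons.1 hchain).2
      have hlast' : (l₁ :: ls'') ≠ [] → h + 1 ≤ (l₁ :: ls'').getLastD 0 ∧ (l₁ :: ls'').getLastD 0 ≤ m := by
        intro _
        have := hlast (by simp)
        rwa [getLastD_cons_of_ne_nil (by simp)] at this
      have IH := ih (l₁ :: ls'') hlen' hchain' hlast' v
      have hmem : (v ∈ s(u, v')) ↔ (v = u ∨ v = v') := Sym2.mem_iff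
      have hS : vS v (SimpleGraph.Walk.cons hadj w').edges (l₀ :: l₁ :: ls'')
          = (if v ∈ s(u, v') then l₀ else 0) + vS v w'.edges (l₁ :: ls'') := by
        rw [hedges, vS_cons]
      have hC : vC v (SimpleGraph.Walk.cons hadj w').edges (l₀ :: l₁ :: ls'')
          = (if v ∈ s(u, v') then 1 else 0) + vC v w'.edges (l₁ :: ls'') := by
        rw [hedges, vC_cons]
      by_cases hu : v = u
      · -- v = u; v ≠ v'
        have hvv' : v ≠ v' := by rw [hu]; exact huv'
        have hin : v ∈ s(u, v') := hmem.2 (Or.inl hu)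
        rw [if_pos hin] at hS hC
        by_cases hb : v = b
        · -- case 4 applies to goal; ih case 3
          refine ⟨fun h1 _ => absurd hu h1, fun _ h2 => absurd hb h2,
            fun h1 _ => absurd hu h1, fun _ _ => ?_⟩
          obtain ⟨c, hc, hs1, hs2⟩ := (IH.2.2.1) hvv' hb
          right
          refine ⟨c, by omega, ?_, ?_⟩ <;> simp only [List.headI_cons] <;> omega
        · -- goal case 2; ih case 1
          refine ⟨fun h1 _ => absurd hu h1, fun _ _ => ?_,
            fun h1 _ => absurd hu h1, fun _ h2 => absurd h2 hb⟩
          obtain ⟨c, hc, hs1, hs2⟩ := IH.1 hvv' hb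
          refine ⟨c, by omega, ?_, ?_⟩ <;> simp only [List.headI_cons] <;> omega
      · by_cases hv' : v = v'
        · have hin : v ∈ s(u, v') := hmem.2 (Or.inr hv')
          rw [if_pos hin] at hS hC
          by_cases hb : v = b
          · -- goal case 3 (v ≠ a, v = b); ih case 4
            refine ⟨fun _ h2 => absurd hb h2, fun h1 _ => absurd h1 hu,
              fun _ _ => ?_, fun h1 _ => absurd h1 hu⟩
            rcases (IH.2.2.2) hv' hb with ⟨habs, _, _⟩ | ⟨c, hc, hs1, hs2⟩
            · simp at habs
            · have e1 : m*(c+1) = m*c + m := by ring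
              have e2 : (m+1)*(c+1) = (m+1)*c + (m+1) := by ring
              simp only [List.headI_cons] at hs1 hs2
              rcases hrel with hrel | hrel <;>
                exact ⟨c + 1, by omega, by omega, by omega⟩
          · -- goal case 1; ih case 2
            refine ⟨fun _ _ => ?_, fun h1 _ => absurd h1 hu,
              fun _ h2 => absurd h2 hb, fun h1 _ => absurd h1 hu⟩
            obtain ⟨c, hc, hs1, hs2⟩ := (IH.2.1) hv' hb
            have e1 : m*(c+1) = m*c + m := by ring
            have e2 : (m+1)*(c+1) = (m+1)*c + (m+1) := by ring
            simp only [List.headI_cons] at hs1 hs2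
            rcases hrel with hrel | hrel <;>
              exact ⟨c + 1, by omega, by omega, by omega⟩
        · -- v not in the first edge
          have hnin : ¬ (v ∈ s(u, v')) := by
            rw [hmem]; push_neg; exact ⟨hu, hv'⟩
          rw [if_neg hnin] at hS hC
          have hS0 := hS; have hC0 := hC
          by_cases hb : v = b
          · refine ⟨fun _ h2 => absurd hb h2, fun h1 _ => absurd h1 hu,
              fun _ _ => ?_, fun h1 _ => absurd h1 hu⟩
            obtain ⟨c, hc, hs1, hs2⟩ := (IH.2.2.1) hv' hb
            exact ⟨c, by omega, by omega, by omega⟩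
          · refine ⟨fun _ _ => ?_, fun h1 _ => absurd h1 hu,
              fun _ h2 => absurd h2 hb, fun h1 _ => absurd h1 hu⟩
            obtain ⟨c, hc, hs1, hs2⟩ := IH.1 hv' hb
            exact ⟨c, by omega, by omega, by omega⟩

end WalkSum

section Positional

variable {α : Type} [DecidableEq α]

lemma zip_agree (es : List α) (ls : List ℕ) (hnd : es.Nodup) :
    ∀ p ∈ es.zip ls, ls.getD (es.idxOf p.1) 0 = p.2 := by
  induction es generalizing ls with
  | nil => intro p hp; simp at hp
  | cons e es ih =>
    intro p hp
    cases ls with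
    | nil => simp at hp
    | cons l ls =>
      rw [List.zip_cons_cons, List.mem_cons] at hp
      rcases hp with rfl | hp
      · simp
      · have h1 : p.1 ∈ es := (List.of_mem_zip hp).1
        have hne : p.1 ≠ e := by
          intro hh; rw [hh] at h1; exact (List.nodup_cons.1 hnd).1 h1
        rw [List.idxOf_cons_ne _ (Ne.symm hne)]
        simpa using ih ls (List.nodup_cons.1 hnd).2 p hp

lemma bijOn_positional (es : List α) (ls : List ℕ) (hnd : es.Nodup) (hnd' : ls.Nodup)
    (hlen : es.length = ls.length) :
    Set.BijOn (fun e => ls.getD (es.idxOf e) 0) {x | x ∈ es} {y | y ∈ ls} := by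
  refine ⟨?_, ?_, ?_⟩
  · intro e he
    simp only [Set.mem_setOf_eq] at he ⊢
    have hidx : es.idxOf e < es.length := List.idxOf_lt_length_iff.2 he
    rw [List.getD_eq_getElem ls 0 (by omega)]
    exact List.getElem_mem _
  · intro e₁ h₁ e₂ h₂ heq
    simp only [Set.mem_setOf_eq] at h₁ h₂
    have hi₁ : es.idxOf e₁ < es.length := List.idxOf_lt_length_iff.2 h₁
    have hi₂ : es.idxOf e₂ < es.length := List.idxOf_lt_length_iff.2 h₂
    simp only [List.getD_eq_getElem ls 0 (show es.idxOf e₁ < ls.length by omega),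
      List.getD_eq_getElem ls 0 (show es.idxOf e₂ < ls.length by omega)] at heq
    have := (hnd'.getElem_inj_iff).1 heq
    exact (List.idxOf_inj h₁).1 this
  · intro y hy
    simp only [Set.mem_setOf_eq] at hy
    obtain ⟨i, hi, rfl⟩ := List.mem_iff_getElem.1 hy
    have hies : i < es.length := by omega
    refine ⟨es[i], by simp [List.getElem_mem], ?_⟩
    show ls.getD (es.idxOf es[i]) 0 = ls[i]
    have hidx : es.idxOf es[i] = i := List.Nodup.idxOf_getElem hnd i hies
    rw [hidx, List.getD_eq_getElem ls 0 hi]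

lemma filter_map_zip (f : α → ℕ) (P : α → Bool) :
    ∀ (es : List α) (ls : List ℕ), es.length = ls.length →
    (∀ p ∈ es.zip ls, f p.1 = p.2) →
    ((es.filter P).map f) = (((es.zip ls).filter (fun p => P p.1)).map Prod.snd) := by
  intro es
  induction es with
  | nil => intro ls _ _; simp
  | cons e es ih =>
    intro ls hlen hag
    cases ls with
    | nil => simp at hlen
    | cons l ls =>
      have hfe : f e = l := hag (e, l) (by simp)
      rw [List.zip_cons_cons]
      by_cases hP : P e
      · rw [List.filter_cons_of_pos hP, List.filter_cons_of_pos (by simpa using hP)]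
        simp only [List.map_cons, hfe]
        rw [ih ls (by simpa using hlen) (fun p hp => hag p (by simp [hp]))]
      · rw [List.filter_cons_of_neg hP, List.filter_cons_of_neg (by simpa using hP)]
        rw [ih ls (by simpa using hlen) (fun p hp => hag p (by simp [hp]))]

end Positional

lemma nodup_of_mem_flatten {α : Type*} {L : List (List α)} (h : L.flatten.Nodup)
    {l : List α} (hl : l ∈ L) : l.Nodup := by
  induction L with
  | nil => simp at hl
  | cons x L ih =>
    rw [List.flatten_cons, List.nodup_append] at h
    rcases List.mem_cons.1 hl with rfl | hl
    · exact h.1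
    · exact ih h.2.1 hl

section Glue

variable {V : Type} [Fintype V] [DecidableEq V]

/-- A trail package: a walk with its endpoints. -/
structure TrailD (G : SimpleGraph V) where
  a : V
  b : V
  w : G.Walk a b

variable {G : SimpleGraph V}

def edgesOf (D : List (TrailD G)) : List (Sym2 V) := (D.map (fun t => t.w.edges)).flatten
def endsOf (D : List (TrailD G)) : List V := (D.map (fun t => [t.a, t.b])).flatten

/-- A good decomposition of `G` into open trails: globally distinct edges covering the
edge set, with every vertex an endpoint of exactly one trail. -/
structure GoodD (G : SimpleGraph V) (D : List (TrailD G)) : Prop where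
  nodup : (edgesOf D).Nodup
  cover : ∀ e, e ∈ G.edgeSet ↔ e ∈ edgesOf D
  ends_nodup : (endsOf D).Nodup
  ends_cover : ∀ v : V, v ∈ endsOf D

def endCount (v : V) (t : TrailD G) : ℕ :=
  (if v = t.a then 1 else 0) + (if v = t.b then 1 else 0)

lemma vS_append (v : V) (es₁ es₂ : List (Sym2 V)) (ls₁ ls₂ : List ℕ)
    (h : es₁.length = ls₁.length) :
    vS v (es₁ ++ es₂) (ls₁ ++ ls₂) = vS v es₁ ls₁ + vS v es₂ ls₂ := by
  unfold vS
  rw [List.zip_append h, List.filter_append, List.map_append, List.sum_append]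

lemma vC_append (v : V) (es₁ es₂ : List (Sym2 V)) (ls₁ ls₂ : List ℕ)
    (h : es₁.length = ls₁.length) :
    vC v (es₁ ++ es₂) (ls₁ ++ ls₂) = vC v es₁ ls₁ + vC v es₂ ls₂ := by
  unfold vC
  rw [List.zip_append h, List.filter_append, List.length_append]

lemma vS_flatten (v : V) : ∀ (A : List (List (Sym2 V))) (B : List (List ℕ)),
    A.map List.length = B.map List.length →
    vS v A.flatten B.flatten = ((A.zip B).map (fun pr => vS v pr.1 pr.2)).sum := by
  intro A
  induction A with
  | nil => intro B h; simp [vS]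
  | cons a A ih =>
    intro B h
    cases B with
    | nil => simp at h
    | cons b B =>
      simp only [List.map_cons, List.cons.injEq] at h
      rw [List.flatten_cons, List.flatten_cons, vS_append v _ _ _ _ h.1, List.zip_cons_cons,
        List.map_cons, List.sum_cons, ih B h.2]

lemma vC_flatten (v : V) : ∀ (A : List (List (Sym2 V))) (B : List (List ℕ)),
    A.map List.length = B.map List.length →
    vC v A.flatten B.flatten = ((A.zip B).map (fun pr => vC v pr.1 pr.2)).sum := by
  intro A
  induction A with
  | nil => intro B h; simp [vC]
  | cons a A ih =>
    intro B h
    cases B with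
    | nil => simp at h
    | cons b B =>
      simp only [List.map_cons, List.cons.injEq] at h
      rw [List.flatten_cons, List.flatten_cons, vC_append v _ _ _ _ h.1, List.zip_cons_cons,
        List.map_cons, List.sum_cons, ih B h.2]

lemma vC_eq_filter_length (v : V) : ∀ (es : List (Sym2 V)) (ls : List ℕ),
    es.length = ls.length →
    vC v es ls = (es.filter (fun e => decide (v ∈ e))).length := by
  intro es
  induction es with
  | nil => intro ls h; simp [vC]
  | cons e es ih =>
    intro ls h
    cases ls with
    | nil => simp at h
    | cons l ls =>
      rw [vC_cons, ih ls (by simpa using h), List.filter_cons]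
      by_cases hv : v ∈ e <;> simp [hv] <;> omega

lemma zip_map_eq {α β : Type*} (g : α → ℕ) (g' : β → ℕ) : ∀ (l₁ : List α) (l₂ : List β),
    l₁.map g = l₂.map g' → ∀ p ∈ l₁.zip l₂, g p.1 = g' p.2 := by
  intro l₁
  induction l₁ with
  | nil => intro l₂ h p hp; simp at hp
  | cons x l₁ ih =>
    intro l₂ h p hp
    cases l₂ with
    | nil => simp at hp
    | cons y l₂ =>
      simp only [List.map_cons, List.cons.injEq] at h
      rw [List.zip_cons_cons, List.mem_cons] at hp
      rcases hp with rfl | hp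
      · exact h.1
      · exact ih l₂ h.2 p hp

lemma per_trail (m h : ℕ) {a b : V} (w : G.Walk a b) (hab : a ≠ b)
    (ls : List ℕ) (hlen : ls.length = w.length)
    (hchain : List.Chain' (fun x y => x + y = m ∨ x + y = m + 1) ls)
    (hends : h + 1 ≤ ls.headI ∧ ls.headI ≤ m ∧ h + 1 ≤ ls.getLastD 0 ∧ ls.getLastD 0 ≤ m)
    (v : V) :
    ∃ c, vC v w.edges ls = 2*c + ((if v = a then 1 else 0) + (if v = b then 1 else 0)) ∧
      m*c + (h+1)*((if v = a then 1 else 0) + (if v = b then 1 else 0)) ≤ vS v w.edges ls ∧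
      vS v w.edges ls ≤ (m+1)*c + m*((if v = a then 1 else 0) + (if v = b then 1 else 0)) := by
  have H := trail_vertex_sum m h w ls hlen hchain (fun _ => ⟨hends.2.2.1, hends.2.2.2⟩) v
  by_cases hva : v = a
  · by_cases hvb : v = b
    · exact absurd (hva.symm.trans hvb) hab
    · obtain ⟨c, hc, h1, h2⟩ := H.2.1 hva hvb
      rw [if_pos hva, if_neg hvb]
      exact ⟨c, by omega, by omega, by omega⟩
  · by_cases hvb : v = b
    · obtain ⟨c, hc, h1, h2⟩ := H.2.2.1 hva hvb
      rw [if_neg hva, if_pos hvb]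
      exact ⟨c, by omega, by omega, by omega⟩
    · obtain ⟨c, hc, h1, h2⟩ := H.1 hva hvb
      rw [if_neg hva, if_neg hvb]
      exact ⟨c, by omega, by omega, by omega⟩

lemma total_bounds (m h : ℕ) (v : V) : ∀ (Z : List (TrailD G × List ℕ)),
    (∀ pr ∈ Z, ∃ c, vC v pr.1.w.edges pr.2 = 2*c + endCount v pr.1 ∧
      m*c + (h+1)*(endCount v pr.1) ≤ vS v pr.1.w.edges pr.2 ∧
      vS v pr.1.w.edges pr.2 ≤ (m+1)*c + m*(endCount v pr.1)) →
    ∃ C, (Z.map (fun pr => vC v pr.1.w.edges pr.2)).sum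
            = 2*C + (Z.map (fun pr => endCount v pr.1)).sum ∧
      m*C + (h+1)*((Z.map (fun pr => endCount v pr.1)).sum)
            ≤ (Z.map (fun pr => vS v pr.1.w.edges pr.2)).sum ∧
      (Z.map (fun pr => vS v pr.1.w.edges pr.2)).sum
            ≤ (m+1)*C + m*((Z.map (fun pr => endCount v pr.1)).sum) := by
  intro Z
  induction Z with
  | nil => intro _; exact ⟨0, by simp⟩
  | cons pr Z ih =>
    intro hp
    obtain ⟨c, hc, h1, h2⟩ := hp pr (by simp)
    obtain ⟨C, hC, H1, H2⟩ := ih (fun q hq => hp q (by simp [hq]))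
    refine ⟨c + C, ?_, ?_, ?_⟩ <;> simp only [List.map_cons, List.sum_cons]
    · omega
    · have e1 : m*(c+C) = m*c + m*C := by ring
      have e2 : (h+1)*(endCount v pr.1 + (Z.map (fun pr => endCount v pr.1)).sum)
          = (h+1)*(endCount v pr.1) + (h+1)*((Z.map (fun pr => endCount v pr.1)).sum) := by ring
      omega
    · have e1 : (m+1)*(c+C) = (m+1)*c + (m+1)*C := by ring
      have e2 : m*(endCount v pr.1 + (Z.map (fun pr => endCount v pr.1)).sum)
          = m*(endCount v pr.1) + m*((Z.map (fun pr => endCount v pr.1)).sum) := by ring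
      omega

lemma endCount_sum (v : V) : ∀ (D : List (TrailD G)),
    (D.map (fun t => endCount v t)).sum = (endsOf D).count v := by
  intro D
  induction D with
  | nil => simp [endsOf]
  | cons t D ih =>
    rw [List.map_cons, List.sum_cons, ih]
    have : endsOf (t :: D) = [t.a, t.b] ++ endsOf D := by simp [endsOf]
    rw [this, List.count_append]
    have hif : ∀ x y : V, (if x = y then (1:ℕ) else 0) = (if y = x then 1 else 0) := by
      intro x y
      by_cases hxy : x = y
      · simp [hxy]
      · simp [hxy, Ne.symm hxy]
    have : List.count v [t.a, t.b] = endCount v t := by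
      have e1 : List.count v [t.a, t.b]
          = (if t.a = v then 1 else 0) + (if t.b = v then 1 else 0) := by
        by_cases h1 : t.a = v <;> by_cases h2 : t.b = v <;>
          simp [List.count_cons, h1, h2]
      rw [e1, endCount, hif v t.a, hif v t.b]
    omega

end Glue

section MainGlue

variable {V : Type} [Fintype V] [DecidableEq V]

theorem glue (G : SimpleGraph V) [DecidableRel G.Adj] (k h m : ℕ)
    (hdeg : ∀ v : V, G.degree v = k) (hk : k = 2*h + 1)
    (hm : G.edgeFinset.card = m) (hm1 : 1 ≤ m)
    (t₀ : AMagic.TrailD G) (D' : List (AMagic.TrailD G))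
    (hD : AMagic.GoodD G (t₀ :: D')) (hlong : 2*h + 1 ≤ t₀.w.length) :
    ∃ f : Sym2 V → ℕ, Set.BijOn f G.edgeSet (Set.Icc 1 m) ∧
      ∀ u v : V,
        (∑ e ∈ (G.incidenceSet u).toFinite.toFinset, f e)
          ≤ (∑ e ∈ (G.incidenceSet v).toFinite.toFinset, f e) + (m - 1) := by
  classical
  set D : List (AMagic.TrailD G) := t₀ :: D' with hDdef
  -- basic facts about the decomposition
  have hends_parts : ∀ t ∈ D, t.a ≠ t.b := by
    intro t ht hab
    have hnd := hD.ends_nodup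
    unfold AMagic.endsOf at hnd
    have : ¬ ([t.a, t.b] : List V).Nodup := by simp [hab]
    apply this
    have hmem : ([t.a, t.b] : List V) ∈ D.map (fun t => [t.a, t.b]) :=
      List.mem_map_of_mem ht
    exact AMagic.nodup_of_mem_flatten hnd hmem
  have hlen_pos : ∀ t ∈ D, 1 ≤ t.w.length := by
    intro t ht
    by_contra hcon
    push_neg at hcon
    have h0 : t.w.length = 0 := by omega
    exact hends_parts t ht (t.w.eq_of_length_eq_zero h0)
  -- the flattened edge list
  set esFlat : List (Sym2 V) := AMagic.edgesOf D with hesdef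
  have hesnd : esFlat.Nodup := hD.nodup
  have hesFinset : esFlat.toFinset = G.edgeFinset := by
    ext e
    rw [List.mem_toFinset, SimpleGraph.mem_edgeFinset, hD.cover e]
  have heslen : esFlat.length = m := by
    rw [← hm, ← hesFinset, List.toFinset_card_of_nodup hesnd]
  -- the length list
  set rs : List ℕ := D.map (fun t => t.w.length) with hrsdef
  have hAlen : (D.map (fun t => t.w.edges)).map List.length = rs := by
    rw [hrsdef, List.map_map]
    apply List.map_congr_left
    intro t _
    exact t.w.length_edges
  have hrs_sum : rs.sum = m := by
    have h1 : esFlat.length = ((D.map (fun t => t.w.edges)).map List.length).sum :=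
      List.length_flatten
    rw [hAlen] at h1
    omega
  -- obtain the label lists
  have hrs_cons : rs = t₀.w.length :: D'.map (fun t => t.w.length) := by
    rw [hrsdef, hDdef, List.map_cons]
  obtain ⟨L, hLlen, hLcoe, hLchain, hLends⟩ :=
    AMagic.labels_pkg m h t₀.w.length (D'.map (fun t => t.w.length))
      (by rw [← List.sum_cons, ← hrs_cons, hrs_sum])
      (by
        intro r hr
        rw [List.mem_map] at hr
        obtain ⟨t, ht, rfl⟩ := hr
        exact hlen_pos t (by simp [hDdef, ht]))
      (by have := hlen_pos t₀ (by simp [hDdef]); omega)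
      hlong
  rw [← hrs_cons] at hLlen
  set lf : List ℕ := L.flatten with hlfdef
  have hlfnd : lf.Nodup := by
    have h1 : (↑lf : Multiset ℕ).Nodup := by
      rw [hLcoe]
      exact (Multiset.nodup_range m).map (fun x y => by omega)
    exact h1
  have hlflen : lf.length = m := by
    have h1 := congrArg Multiset.card hLcoe
    simpa using h1
  -- the labeling function
  set f : Sym2 V → ℕ := fun e => lf.getD (esFlat.idxOf e) 0 with hfdef
  have hag : ∀ p ∈ esFlat.zip lf, f p.1 = p.2 := fun p hp => AMagic.zip_agree esFlat lf hesnd p hp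
  have hBij0 := AMagic.bijOn_positional esFlat lf hesnd hlfnd (by omega)
  have hsetE : {x | x ∈ esFlat} = G.edgeSet := by
    ext e; exact (hD.cover e).symm
  have hsetL : {y | y ∈ lf} = Set.Icc 1 m := by
    ext y
    simp only [Set.mem_setOf_eq, Set.mem_Icc]
    constructor
    · intro hy
      have : y ∈ (↑lf : Multiset ℕ) := hy
      rw [hLcoe, Multiset.mem_map] at this
      obtain ⟨j, hj, rfl⟩ := this
      rw [Multiset.mem_range] at hj
      omega
    · intro hy
      have : y ∈ (↑lf : Multiset ℕ) := by
        rw [hLcoe, Multiset.mem_map]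
        exact ⟨y - 1, by rw [Multiset.mem_range]; omega, by omega⟩
      exact this
  refine ⟨f, by rw [← hsetE, ← hsetL]; exact hBij0, ?_⟩
  -- vertex sums
  have hvsum : ∀ v : V, (∑ e ∈ (G.incidenceSet v).toFinite.toFinset, f e)
      = AMagic.vS v esFlat lf := by
    intro v
    have hset : (G.incidenceSet v).toFinite.toFinset
        = (esFlat.filter (fun e => decide (v ∈ e))).toFinset := by
      ext e
      rw [Set.Finite.mem_toFinset, List.mem_toFinset, List.mem_filter]
      constructor
      · intro he
        have h1 : e ∈ G.edgeSet := he.1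
        exact ⟨(hD.cover e).1 h1, by simp [he.2]⟩
      · intro he
        exact ⟨(hD.cover e).2 he.1, by simpa using he.2⟩
    rw [hset, List.sum_toFinset _ (hesnd.filter _)]
    rw [AMagic.filter_map_zip f (fun e => decide (v ∈ e)) esFlat lf (by omega) hag]
    rfl
  -- decompose the vertex sum over trails
  have hABlen : (D.map (fun t => t.w.edges)).map List.length = L.map List.length := by
    rw [hAlen, hLlen]
  have hzipAB : (D.map (fun t => t.w.edges)).zip L
      = (D.zip L).map (fun pr => (pr.1.w.edges, pr.2)) := by
    rw [List.zip_map_left]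
    apply List.map_congr_left
    intro pr _
    cases pr
    rfl
  have hvS_split : ∀ v : V, AMagic.vS v esFlat lf
      = ((D.zip L).map (fun pr => AMagic.vS v pr.1.w.edges pr.2)).sum := by
    intro v
    rw [hesdef, hlfdef]
    show AMagic.vS v (AMagic.edgesOf D) L.flatten = _
    unfold AMagic.edgesOf
    rw [AMagic.vS_flatten v _ _ hABlen, hzipAB, List.map_map]
    rfl
  have hvC_split : ∀ v : V, AMagic.vC v esFlat lf
      = ((D.zip L).map (fun pr => AMagic.vC v pr.1.w.edges pr.2)).sum := by
    intro v
    rw [hesdef, hlfdef]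
    show AMagic.vC v (AMagic.edgesOf D) L.flatten = _
    unfold AMagic.edgesOf
    rw [AMagic.vC_flatten v _ _ hABlen, hzipAB, List.map_map]
    rfl
  -- lengths agree pairwise in the zip
  have hzip_len : ∀ pr ∈ D.zip L, pr.2.length = pr.1.w.length := by
    intro pr hpr
    have := AMagic.zip_map_eq (fun t : AMagic.TrailD G => t.w.length) List.length D L
      (by rw [← hrsdef, ← hLlen]) pr hpr
    omega
  -- per-trail bounds
  have hper : ∀ v : V, ∀ pr ∈ D.zip L,
      ∃ c, AMagic.vC v pr.1.w.edges pr.2 = 2*c + AMagic.endCount v pr.1 ∧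
        m*c + (h+1)*(AMagic.endCount v pr.1) ≤ AMagic.vS v pr.1.w.edges pr.2 ∧
        AMagic.vS v pr.1.w.edges pr.2 ≤ (m+1)*c + m*(AMagic.endCount v pr.1) := by
    intro v pr hpr
    have hmem1 : pr.1 ∈ D := (List.of_mem_zip hpr).1
    have hmem2 : pr.2 ∈ L := (List.of_mem_zip hpr).2
    have := AMagic.per_trail m h pr.1.w (hends_parts pr.1 hmem1) pr.2
      (hzip_len pr hpr)
      (hLchain pr.2 hmem2)
      (hLends pr.2 hmem2) v
    unfold AMagic.endCount
    exact this
  -- vertex degree: the number of incident positions is k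
  have hdeg_count : ∀ v : V,
      ((D.zip L).map (fun pr => AMagic.vC v pr.1.w.edges pr.2)).sum = k := by
    intro v
    rw [← hvC_split v]
    rw [AMagic.vC_eq_filter_length v esFlat lf (by omega)]
    have h1 : (esFlat.filter (fun e => decide (v ∈ e))).length
        = (esFlat.filter (fun e => decide (v ∈ e))).toFinset.card := by
      rw [List.toFinset_card_of_nodup (hesnd.filter _)]
    rw [h1]
    have h2 : (esFlat.filter (fun e => decide (v ∈ e))).toFinset = G.incidenceFinset v := by
      ext e
      rw [List.mem_toFinset, List.mem_filter, SimpleGraph.mem_incidenceFinset]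
      constructor
      · intro he
        exact ⟨(hD.cover e).2 he.1, by simpa using he.2⟩
      · intro he
        exact ⟨(hD.cover e).1 he.1, by simp [he.2]⟩
    rw [h2, SimpleGraph.card_incidenceFinset_eq_degree]
    exact hdeg v
  -- number of ends is 1
  have hE : ∀ v : V, ((D.zip L).map (fun pr => AMagic.endCount v pr.1)).sum = 1 := by
    intro v
    have hDL_len : D.length = L.length := by
      have h1 := congrArg List.length hLlen
      have h2 := congrArg List.length hrsdef
      simp only [List.length_map] at h1 h2
      omega
    have hfst : (D.zip L).map Prod.fst = D := List.map_fst_zip (by omega)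
    have h1 : ((D.zip L).map (fun pr => AMagic.endCount v pr.1)).sum
        = (D.map (fun t => AMagic.endCount v t)).sum := by
      rw [show (fun pr : AMagic.TrailD G × List ℕ => AMagic.endCount v pr.1)
          = (fun t => AMagic.endCount v t) ∘ Prod.fst from rfl]
      rw [← List.map_map, hfst]
    rw [h1, AMagic.endCount_sum]
    have hmem := hD.ends_cover v
    have hnd := hD.ends_nodup
    have hle := List.nodup_iff_count_le_one.1 hnd v
    have hge := List.count_pos_iff.2 hmem
    omega
  -- total bounds
  have hbounds : ∀ v : V, m*h + (h+1) ≤ AMagic.vS v esFlat lf ∧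
      AMagic.vS v esFlat lf ≤ (m+1)*h + m := by
    intro v
    obtain ⟨C, hC, h1, h2⟩ := AMagic.total_bounds m h v (D.zip L) (hper v)
    have hCk := hdeg_count v
    have hEv := hE v
    rw [hEv] at hC h1 h2
    have hCh : C = h := by omega
    rw [hCh] at h1 h2
    rw [hvS_split v]
    omega
  intro u v
  rw [hvsum u, hvsum v]
  have hu := hbounds u
  have hv := hbounds v
  have e1 : (m+1)*h = m*h + h := by ring
  omega

end MainGlue

section Euler

variable {V : Type} [Fintype V] [DecidableEq V] {G : SimpleGraph V}

open SimpleGraph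

lemma mem_support_rotate {v u : V} (c : G.Walk v v) (h : u ∈ c.support) {w : V}
    (hw : w ∈ c.support) : w ∈ (c.rotate _ h).support := by
  unfold SimpleGraph.Walk.rotate
  rw [SimpleGraph.Walk.mem_support_append_iff]
  rw [← SimpleGraph.Walk.take_spec c h, SimpleGraph.Walk.mem_support_append_iff] at hw
  tauto

lemma exists_unused_at_support {v₀ : V} (p : G.Walk v₀ v₀) :
    ∀ {u vv : V} (_ : G.Walk u vv), vv ∈ p.support → ∀ {y : V}, G.Adj u y → s(u, y) ∉ p.edges →
    ∃ x ∈ p.support, ∃ z, G.Adj x z ∧ s(x, z) ∉ p.edges := by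
  intro u vv W
  induction W with
  | nil =>
    intro hvv y h hn
    exact ⟨_, hvv, y, h, hn⟩
  | @cons u u' vv2 huu' W' ih =>
    intro hvv y h hn
    by_cases hu : u ∈ p.support
    · exact ⟨u, hu, y, h, hn⟩
    · refine ih hvv huu'.symm ?_
      intro hmem
      rw [Sym2.eq_swap] at hmem
      exact hu (SimpleGraph.Walk.fst_mem_support_of_mem_edges p hmem)

lemma exists_max_closed_trail {H : SimpleGraph V} [DecidableRel H.Adj] {x z : V}
    (hadj : H.Adj x z) (heven : ∀ v : V, Even (H.degree v)) :
    ∃ c : H.Walk x x, c.IsTrail ∧ 0 < c.length := by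
  classical
  set P : ℕ → Prop := fun n => ∃ (y : V) (q : H.Walk x y), q.IsTrail ∧ q.length = n with hP
  have h1 : P 1 := ⟨z, SimpleGraph.Walk.cons hadj SimpleGraph.Walk.nil,
    by simp [SimpleGraph.Walk.isTrail_def], rfl⟩
  set N := H.edgeFinset.card with hN
  have hbound : ∀ n, P n → n ≤ N := by
    rintro n ⟨y, q, hq, rfl⟩
    exact hq.length_le_card_edgeFinset
  have hN1 : 1 ≤ N := hbound 1 h1
  have hPmax : P (Nat.findGreatest P N) :=
    Nat.findGreatest_spec hN1 h1
  have hmax1 : 1 ≤ Nat.findGreatest P N := Nat.le_findGreatest hN1 h1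
  obtain ⟨y, q, hq, hqlen⟩ := hPmax
  have hyx : y = x := by
    by_contra hyx
    -- q uses an odd number of edges at y, but the degree of y is even: extend
    have hodd : ¬ Even (q.edges.countP (fun e => y ∈ e)) := by
      rw [hq.even_countP_edges_iff y]
      push_neg
      exact ⟨fun hcon => hyx hcon.symm, fun _ => rfl⟩
    set B : Finset (Sym2 V) := (q.edges.filter (fun e => decide (y ∈ e))).toFinset with hB
    have hBnodup : (q.edges.filter (fun e => decide (y ∈ e))).Nodup := hq.edges_nodup.filter _
    have hBcard : B.card = q.edges.countP (fun e => decide (y ∈ e)) := by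
      rw [hB, List.toFinset_card_of_nodup hBnodup, List.countP_eq_length_filter]
    have hBsub : B ⊆ H.incidenceFinset y := by
      intro e he
      rw [hB, List.mem_toFinset, List.mem_filter] at he
      rw [SimpleGraph.mem_incidenceFinset]
      exact ⟨q.edges_subset_edgeSet he.1, by simpa using he.2⟩
    have hAcard : (H.incidenceFinset y).card = H.degree y :=
      SimpleGraph.card_incidenceFinset_eq_degree H y
    have hBneA : B ≠ H.incidenceFinset y := by
      intro hcon
      apply hodd
      have h2 : B.card = H.degree y := by rw [hcon, hAcard]
      rw [hBcard] at h2
      rw [h2]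
      exact heven y
    obtain ⟨e, heA, heB⟩ := Finset.exists_of_ssubset (hBsub.ssubset_of_ne hBneA)
    rw [SimpleGraph.mem_incidenceFinset] at heA
    obtain ⟨hedge, hy⟩ := heA
    -- other endpoint
    set z' := Sym2.Mem.other' hy with hz'
    have hez : e = s(y, z') := (Sym2.other_spec' hy).symm
    have hadj' : H.Adj y z' := by
      rw [← SimpleGraph.mem_edgeSet, ← hez]; exact hedge
    have henotin : e ∉ q.edges := by
      intro hcon
      apply heB
      rw [hB, List.mem_toFinset, List.mem_filter]
      exact ⟨hcon, by simpa using hy⟩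
    have hext : P (Nat.findGreatest P N + 1) := by
      refine ⟨z', q.concat hadj', ?_, ?_⟩
      · rw [SimpleGraph.Walk.isTrail_def, SimpleGraph.Walk.edges_concat]
        rw [List.concat_eq_append]
        rw [List.nodup_append]
        refine ⟨hq.edges_nodup, by simp, ?_⟩
        intro a ha b hb hab
        subst hab
        simp only [List.mem_singleton] at hb
        subst hb
        rw [← hez] at ha
        exact henotin ha
      · rw [SimpleGraph.Walk.length_concat, hqlen]
    have hle := hbound _ hext
    exact absurd hext (Nat.findGreatest_is_greatest (P := P) (n := N) (by omega) (by omega))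
  subst hyx
  exact ⟨q, hq, by omega⟩

theorem euler_exists [DecidableRel G.Adj] (hc : G.Connected)
    (heven : ∀ v : V, Even (G.degree v)) (v₀ : V) :
    ∃ p : G.Walk v₀ v₀, p.IsTrail ∧ ∀ e ∈ G.edgeSet, e ∈ p.edges := by
  classical
  suffices H : ∀ n : ℕ, ∀ p : G.Walk v₀ v₀, p.IsTrail →
      G.edgeFinset.card ≤ p.edges.length + n →
      ∃ q : G.Walk v₀ v₀, q.IsTrail ∧ ∀ e ∈ G.edgeSet, e ∈ q.edges by
    exact H G.edgeFinset.card SimpleGraph.Walk.nil (by simp [SimpleGraph.Walk.isTrail_def])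
      (by simp)
  intro n
  induction n with
  | zero =>
    intro p hp hcard
    refine ⟨p, hp, ?_⟩
    have hsub : p.edges.toFinset ⊆ G.edgeFinset := by
      intro e he
      rw [List.mem_toFinset] at he
      rw [SimpleGraph.mem_edgeFinset]
      exact p.edges_subset_edgeSet he
    have hlen : p.edges.toFinset.card = p.edges.length :=
      List.toFinset_card_of_nodup hp.edges_nodup
    have heq : p.edges.toFinset = G.edgeFinset :=
      Finset.eq_of_subset_of_card_le hsub (by omega)
    intro e he
    rw [← List.mem_toFinset, heq, SimpleGraph.mem_edgeFinset]
    exact he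
  | succ n ih =>
    intro p hp hcard
    by_cases hdone : ∀ e ∈ G.edgeSet, e ∈ p.edges
    · exact ⟨p, hp, hdone⟩
    · push_neg at hdone
      obtain ⟨e₀, he₀, he₀n⟩ := hdone
      -- find a vertex on p with an unused edge
      have hfind : ∃ x ∈ p.support, ∃ z, G.Adj x z ∧ s(x, z) ∉ p.edges := by
        induction e₀ using Sym2.ind with
        | _ u y =>
          rw [SimpleGraph.mem_edgeSet] at he₀
          exact exists_unused_at_support p ((hc.preconnected u v₀).some)
            p.start_mem_support he₀ he₀n
      obtain ⟨x, hx, z, hxz, hxzn⟩ := hfind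
      -- the graph of unused edges
      set H : SimpleGraph V := G.deleteEdges {e | e ∈ p.edges} with hH
      haveI : DecidableRel H.Adj := fun a b =>
        decidable_of_iff (G.Adj a b ∧ s(a, b) ∉ p.edges)
          (by rw [hH, SimpleGraph.deleteEdges_adj]; simp)
      have hHdeg : ∀ v : V, Even (H.degree v) := by
        intro v
        have hinc : H.incidenceFinset v
            = G.incidenceFinset v \ (p.edges.filter (fun e => decide (v ∈ e))).toFinset := by
          ext e
          rw [SimpleGraph.mem_incidenceFinset, Finset.mem_sdiff,
            SimpleGraph.mem_incidenceFinset, List.mem_toFinset, List.mem_filter]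
          constructor
          · intro hmem
            have h1 : e ∈ H.edgeSet := hmem.1
            have h2 : v ∈ e := hmem.2
            rw [hH, SimpleGraph.edgeSet_deleteEdges] at h1
            exact ⟨⟨h1.1, h2⟩, fun hcon => h1.2 hcon.1⟩
          · intro hmem
            have h1 : e ∈ H.edgeSet := by
              rw [hH, SimpleGraph.edgeSet_deleteEdges]
              exact ⟨hmem.1.1, fun hcon => hmem.2 ⟨hcon, by simpa using hmem.1.2⟩⟩
            exact ⟨h1, hmem.1.2⟩
        have hsub : (p.edges.filter (fun e => decide (v ∈ e))).toFinset ⊆ G.incidenceFinset v := by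
          intro e he
          rw [List.mem_toFinset, List.mem_filter] at he
          rw [SimpleGraph.mem_incidenceFinset]
          exact ⟨p.edges_subset_edgeSet he.1, by simpa using he.2⟩
        have hcard2 : H.degree v = G.degree v
            - (p.edges.filter (fun e => decide (v ∈ e))).toFinset.card := by
          rw [← SimpleGraph.card_incidenceFinset_eq_degree, hinc, Finset.card_sdiff_of_subset hsub,
            SimpleGraph.card_incidenceFinset_eq_degree]
        have hfcard : (p.edges.filter (fun e => decide (v ∈ e))).toFinset.card
            = p.edges.countP (fun e => decide (v ∈ e)) := by
          rw [List.toFinset_card_of_nodup (hp.edges_nodup.filter _),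
            List.countP_eq_length_filter]
        have hevenP : Even (p.edges.countP (fun e => decide (v ∈ e))) := by
          have := (hp.even_countP_edges_iff v).2 (fun hcon => absurd rfl hcon)
          exact this
        have hle : (p.edges.filter (fun e => decide (v ∈ e))).toFinset.card ≤ G.degree v := by
          rw [← SimpleGraph.card_incidenceFinset_eq_degree]
          exact Finset.card_le_card hsub
        rw [hcard2, hfcard] at *
        exact (heven v).tsub hevenP
      have hHadj : H.Adj x z := by
        rw [hH, SimpleGraph.deleteEdges_adj]
        exact ⟨hxz, hxzn⟩
      obtain ⟨c, hctrail, hclen⟩ := exists_max_closed_trail hHadj hHdeg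
      -- transfer c to G
      have hcsub : ∀ e ∈ c.edges, e ∈ G.edgeSet := by
        intro e he
        have := c.edges_subset_edgeSet he
        rw [hH, SimpleGraph.edgeSet_deleteEdges] at this
        exact this.1
      set cG : G.Walk x x := c.transfer G hcsub with hcG
      have hcGedges : cG.edges = c.edges := SimpleGraph.Walk.edges_transfer c hcsub
      have hcdisj : ∀ e ∈ cG.edges, e ∉ p.edges := by
        intro e he
        rw [hcGedges] at he
        have := c.edges_subset_edgeSet he
        rw [hH, SimpleGraph.edgeSet_deleteEdges] at this
        exact this.2
      -- splice
      set p₁ : G.Walk x x := (p.rotate _ hx).append cG with hp₁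
      have hp₁trail : p₁.IsTrail := by
        rw [SimpleGraph.Walk.isTrail_def, hp₁, SimpleGraph.Walk.edges_append, List.nodup_append]
        refine ⟨?_, ?_, ?_⟩
        · exact ((p.rotate_edges _ hx).perm.nodup_iff).2 hp.edges_nodup
        · rw [hcGedges]; exact hctrail.edges_nodup
        · intro a ha b hb hab
          subst hab
          have ha' : a ∈ p.edges := ((p.rotate_edges _ hx).perm.mem_iff).1 ha
          exact hcdisj a hb ha'
      have hv₀p₁ : v₀ ∈ p₁.support := by
        rw [hp₁, SimpleGraph.Walk.mem_support_append_iff]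
        left
        exact mem_support_rotate p hx p.start_mem_support
      set p₂ : G.Walk v₀ v₀ := p₁.rotate _ hv₀p₁ with hp₂
      have hp₂trail : p₂.IsTrail := hp₁trail.rotate hv₀p₁
      have hp₂len : p₂.edges.length = p.edges.length + c.edges.length := by
        have h1 : p₂.edges.length = p₁.edges.length :=
          ((p₁.rotate_edges _ hv₀p₁).perm.length_eq)
        rw [h1, hp₁, SimpleGraph.Walk.edges_append, List.length_append]
        congr 1
        · exact (p.rotate_edges _ hx).perm.length_eq
        · rw [hcGedges]
      have hclen' : 1 ≤ c.edges.length := by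
        rw [SimpleGraph.Walk.length_edges]
        omega
      exact ih p₂ hp₂trail (by omega)

end Euler

section Apex

variable {V : Type} [Fintype V] [DecidableEq V]

def apex (G : SimpleGraph V) : SimpleGraph (Option V) where
  Adj x y := match x, y with
    | some u, some v => G.Adj u v
    | some _, none => True
    | none, some _ => True
    | none, none => False
  symm := by
    constructor
    rintro (_ | u) (_ | v) h
    · exact h
    · exact trivial
    · exact trivial
    · exact h.symm
  loopless := by
    constructor
    rintro (_ | u) h
    · exact h
    · exact G.loopless.irrefl u h

variable {G : SimpleGraph V}

@[simp] lemma apex_adj_some_some {u v : V} : (apex G).Adj (some u) (some v) ↔ G.Adj u v :=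
  Iff.rfl

@[simp] lemma apex_adj_some_none {u : V} : (apex G).Adj (some u) none := trivial

@[simp] lemma apex_adj_none_some {u : V} : (apex G).Adj none (some u) := trivial

@[simp] lemma apex_adj_none_none : ¬ (apex G).Adj none none := fun h => h

instance apexDecidable [DecidableRel G.Adj] : DecidableRel (apex G).Adj := fun x y =>
  match x, y with
  | some u, some v => (inferInstance : Decidable (G.Adj u v))
  | some _, none => Decidable.isTrue trivial
  | none, some _ => Decidable.isTrue trivial
  | none, none => Decidable.isFalse fun h => h

lemma apex_degree_some [DecidableRel G.Adj] (v : V) :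
    (apex G).degree (some v) = G.degree v + 1 := by
  have h1 : (apex G).neighborFinset (some v) = insert none ((G.neighborFinset v).image some) := by
    ext x
    rw [SimpleGraph.mem_neighborFinset, Finset.mem_insert]
    cases x with
    | none => simp
    | some u =>
      simp only [apex_adj_some_some, Finset.mem_image]
      constructor
      · intro h
        right
        exact ⟨u, by rwa [SimpleGraph.mem_neighborFinset], rfl⟩
      · rintro (h | ⟨w, hw, hww⟩)
        · exact absurd h (by simp)
        · have : w = u := by simpa using hww
          subst this
          rwa [SimpleGraph.mem_neighborFinset] at hw
  rw [SimpleGraph.degree, h1, Finset.card_insert_of_notMem (by simp),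
    Finset.card_image_of_injective _ (Option.some_injective V)]
  rfl

lemma apex_degree_none [DecidableRel G.Adj] :
    (apex G).degree none = Fintype.card V := by
  have h1 : (apex G).neighborFinset none = Finset.univ.image some := by
    ext x
    rw [SimpleGraph.mem_neighborFinset]
    cases x with
    | none => simp
    | some u => simp
  rw [SimpleGraph.degree, h1, Finset.card_image_of_injective _ (Option.some_injective V),
    Finset.card_univ]

lemma apex_connected : (apex G).Connected := by
  have hreach : ∀ x : Option V, (apex G).Reachable x none := by
    intro x
    cases x with
    | none => exact SimpleGraph.Reachable.refl none
    | some u => exact SimpleGraph.Adj.reachable apex_adj_some_none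
  constructor
  · intro x y
    exact (hreach x).trans (hreach y).symm

end Apex

section Split

variable {V : Type} [Fintype V] [DecidableEq V] {G : SimpleGraph V}

mutual
  def splitP : {u : V} → (apex G).Walk (some u) none → (Σ b : V, G.Walk u b) × List (AMagic.TrailD G)
    | _, .cons (v := some u') h q =>
        let r := splitP q
        (⟨r.1.1, SimpleGraph.Walk.cons (apex_adj_some_some.1 h) r.1.2⟩, r.2)
    | u, .cons (v := none) _ q => (⟨u, SimpleGraph.Walk.nil⟩, splitN q)
  termination_by u p => p.length
  decreasing_by all_goals simp [SimpleGraph.Walk.length_cons]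

  def splitN : (apex G).Walk none none → List (AMagic.TrailD G)
    | .nil => []
    | .cons (v := some u) _ q =>
        let r := splitP q
        ⟨u, r.1.1, r.1.2⟩ :: r.2
    | .cons (v := none) h _ => absurd h apex_adj_none_none
  termination_by p => p.length
  decreasing_by all_goals simp [SimpleGraph.Walk.length_cons]
end

end Split

section SplitSpec

variable {V : Type} [Fintype V] [DecidableEq V] {G : SimpleGraph V}

lemma split_spec : ∀ (n : ℕ),
    (∀ (u : V) (p : (apex G).Walk (some u) none), p.length ≤ n →
      ((splitP p).1.2.edges ++ AMagic.edgesOf (splitP p).2).map (Sym2.map some)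
          = p.edges.filter (fun e => !(decide (none ∈ e))) ∧
      p.edges.filter (fun e => decide (none ∈ e))
          = s(none, some (splitP p).1.1)
              :: (AMagic.endsOf (splitP p).2).map (fun v => s(none, some v))) ∧
    (∀ (p : (apex G).Walk none none), p.length ≤ n →
      (AMagic.edgesOf (splitN p)).map (Sym2.map some)
          = p.edges.filter (fun e => !(decide (none ∈ e))) ∧
      p.edges.filter (fun e => decide (none ∈ e))
          = (AMagic.endsOf (splitN p)).map (fun v => s(none, some v))) := by
  intro n
  induction n with
  | zero =>
    constructor
    · intro u p hlen
      cases p with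
      | cons h q => simp at hlen
    · intro p hlen
      cases p with
      | nil =>
        refine ⟨?_, ?_⟩ <;> simp [splitN, AMagic.edgesOf, AMagic.endsOf]
      | cons h q => simp at hlen
  | succ n ih =>
    constructor
    · -- splitP
      intro u p hlen
      cases p with
      | @cons _ y _ h q =>
        have hqlen : q.length ≤ n := by
          have := SimpleGraph.Walk.length_cons h q
          omega
        cases y with
        | some u' =>
          have hsp : splitP (SimpleGraph.Walk.cons h q)
              = (⟨(splitP q).1.1,
                  SimpleGraph.Walk.cons (apex_adj_some_some.1 h) (splitP q).1.2⟩,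
                 (splitP q).2) := by
            rw [splitP]
          obtain ⟨ih1, ih2⟩ := (ih.1) u' q hqlen
          rw [hsp]
          constructor
          · rw [SimpleGraph.Walk.edges_cons, SimpleGraph.Walk.edges_cons]
            rw [List.filter_cons_of_pos (by simp)]
            simp only [List.cons_append, List.map_cons]
            rw [ih1]
            congr 1
          · rw [SimpleGraph.Walk.edges_cons, List.filter_cons_of_neg (by simp)]
            exact ih2
        | none =>
          have hsp : splitP (SimpleGraph.Walk.cons h q)
              = (⟨u, SimpleGraph.Walk.nil⟩, splitN q) := by
            rw [splitP]
          obtain ⟨ih1, ih2⟩ := (ih.2) q hqlen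
          rw [hsp]
          constructor
          · rw [SimpleGraph.Walk.edges_cons, List.filter_cons_of_neg (by simp)]
            simpa using ih1
          · rw [SimpleGraph.Walk.edges_cons, List.filter_cons_of_pos (by simp)]
            rw [ih2]
            congr 1
            exact Sym2.eq_swap
    · -- splitN
      intro p hlen
      cases p with
      | nil =>
        refine ⟨?_, ?_⟩ <;> simp [splitN, AMagic.edgesOf, AMagic.endsOf]
      | @cons _ y _ h q =>
        have hqlen : q.length ≤ n := by
          have := SimpleGraph.Walk.length_cons h q
          omega
        cases y with
        | some u =>
          have hsp : splitN (SimpleGraph.Walk.cons h q)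
              = ⟨u, (splitP q).1.1, (splitP q).1.2⟩ :: (splitP q).2 := by
            rw [splitN]
          obtain ⟨ih1, ih2⟩ := (ih.1) u q hqlen
          rw [hsp]
          constructor
          · rw [SimpleGraph.Walk.edges_cons, List.filter_cons_of_neg (by simp)]
            rw [← ih1]
            rfl
          · rw [SimpleGraph.Walk.edges_cons, List.filter_cons_of_pos (by simp)]
            rw [ih2]
            rfl
        | none => exact absurd h apex_adj_none_none

end SplitSpec

section BuildDecomp

variable {V : Type} [Fintype V] [DecidableEq V]

lemma perm_flatten {α : Type*} : ∀ {l₁ l₂ : List (List α)}, l₁.Perm l₂ →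
    l₁.flatten.Perm l₂.flatten := by
  intro l₁ l₂ hp
  induction hp with
  | nil => simp
  | cons x _ ih => simpa using ih.append_left x
  | swap x y l =>
    simp only [List.flatten_cons]
    rw [← List.append_assoc, ← List.append_assoc]
    exact List.perm_append_comm.append_right _
  | trans _ _ ih1 ih2 => exact ih1.trans ih2

lemma goodD_perm {G : SimpleGraph V} {D D' : List (AMagic.TrailD G)} (hp : D.Perm D')
    (hD : AMagic.GoodD G D) : AMagic.GoodD G D' := by
  have he : (AMagic.edgesOf D).Perm (AMagic.edgesOf D') := perm_flatten (hp.map _)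
  have hv : (AMagic.endsOf D).Perm (AMagic.endsOf D') := perm_flatten (hp.map _)
  exact ⟨he.nodup_iff.1 hD.nodup, fun e => (hD.cover e).trans he.mem_iff,
    hv.nodup_iff.1 hD.ends_nodup, fun v => hv.mem_iff.1 (hD.ends_cover v)⟩

theorem exists_goodD (G : SimpleGraph V) [DecidableRel G.Adj] (hc : G.Connected)
    (hodd : ∀ v : V, Odd (G.degree v)) (hneven : Even (Fintype.card V)) :
    ∃ D : List (AMagic.TrailD G), AMagic.GoodD G D := by
  have heven : ∀ x : Option V, Even ((apex G).degree x) := by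
    intro x
    cases x with
    | none => rw [apex_degree_none]; exact hneven
    | some v => rw [apex_degree_some]; exact (hodd v).add_one
  obtain ⟨p, htrail, hcov⟩ := euler_exists apex_connected heven none
  obtain ⟨h1, h2⟩ := (split_spec p.length).2 p le_rfl
  have hpnodup := htrail.edges_nodup
  have hinj : Function.Injective (Sym2.map (some : V → Option V)) :=
    Sym2.map.injective (Option.some_injective V)
  refine ⟨splitN p, ?_, ?_, ?_, ?_⟩
  · -- edges nodup
    have hf : (p.edges.filter (fun e => !(decide (none ∈ e)))).Nodup := hpnodup.filter _
    rw [← h1] at hf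
    exact hf.of_map _
  · -- cover
    intro e
    constructor
    · intro he
      have hmape : Sym2.map some e ∈ p.edges.filter (fun e => !(decide (none ∈ e))) := by
        rw [List.mem_filter]
        constructor
        · apply hcov
          induction e using Sym2.ind with
          | _ a b =>
            rw [Sym2.map_pair_eq, SimpleGraph.mem_edgeSet]
            rw [SimpleGraph.mem_edgeSet] at he
            exact apex_adj_some_some.2 he
        · induction e using Sym2.ind with
          | _ a b => simp [Sym2.map_pair_eq]
      rw [← h1, List.mem_map] at hmape
      obtain ⟨e', he', heq⟩ := hmape
      rwa [← hinj heq]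
    · intro he
      have hmape : Sym2.map some e ∈ p.edges.filter (fun e => !(decide (none ∈ e))) := by
        rw [← h1, List.mem_map]
        exact ⟨e, he, rfl⟩
      rw [List.mem_filter] at hmape
      have := p.edges_subset_edgeSet hmape.1
      induction e using Sym2.ind with
      | _ a b =>
        rw [Sym2.map_pair_eq, SimpleGraph.mem_edgeSet] at this
        rw [SimpleGraph.mem_edgeSet]
        exact apex_adj_some_some.1 this
  · -- ends nodup
    have hf : (p.edges.filter (fun e => decide (none ∈ e))).Nodup := hpnodup.filter _
    rw [h2] at hf
    exact hf.of_map _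
  · -- ends cover
    intro v
    have hmem : s(none, some v) ∈ p.edges.filter (fun e => decide (none ∈ e)) := by
      rw [List.mem_filter]
      refine ⟨hcov _ ?_, by simp⟩
      rw [SimpleGraph.mem_edgeSet]
      exact apex_adj_none_some
    rw [h2, List.mem_map] at hmem
    obtain ⟨v', hv', heq⟩ := hmem
    have : v' = v := by
      have := Sym2.eq_iff.1 heq
      rcases this with ⟨_, h⟩ | ⟨h, _⟩
      · exact Option.some_injective V h
      · simp at h
    rwa [← this]

end BuildDecomp

end AMagic

theorem connected_odd_regular_approx_magic' {V : Type} [Finite V] {n k : ℕ}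
    (G : SimpleGraph V) (hn : Nat.card V = n)
    (hreg : ∀ v : V, Nat.card (G.neighborSet v) = k)
    (hk1 : 1 ≤ k) (hodd : Odd k) (hconn : G.Connected) :
    ∃ f : Sym2 V → ℕ,
      Set.BijOn f G.edgeSet (Set.Icc 1 (n * k / 2)) ∧
      ∀ u v : V,
        (∑ e ∈ (G.incidenceSet u).toFinite.toFinset, f e)
          ≤ (∑ e ∈ (G.incidenceSet v).toFinite.toFinset, f e) + (n * k / 2 - 1) := by
  classical
  have hne : Nonempty V := hconn.nonempty
  letI : Fintype V := Fintype.ofFinite V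
  letI : DecidableRel G.Adj := Classical.decRel _
  -- degrees
  have hdeg : ∀ v : V, G.degree v = k := by
    intro v
    rw [← hreg v, Nat.card_coe_set_eq, Set.ncard_eq_toFinset_card']
    rfl
  have hncard : Fintype.card V = n := by rw [← hn, Nat.card_eq_fintype_card]
  set m := G.edgeFinset.card with hmdef
  have hsumdeg : ∑ v : V, G.degree v = n * k := by
    rw [Finset.sum_congr rfl (fun v _ => hdeg v), Finset.sum_const, Finset.card_univ,
      hncard, smul_eq_mul]
  have hmk : n * k = 2 * m := by
    rw [← hsumdeg, hmdef]
    exact SimpleGraph.sum_degrees_eq_twice_card_edges G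
  have hneven : Even n := by
    have h2 : Even (n * k) := by rw [hmk]; exact even_two_mul m
    rcases Nat.even_mul.1 h2 with h | h
    · exact h
    · exact absurd h (Nat.not_even_iff_odd.2 hodd)
  have hnk2 : n * k / 2 = m := by omega
  have hn1 : 1 ≤ n := by
    rw [← hncard]
    exact Fintype.card_pos
  have hm1 : 1 ≤ m := by
    have h0 : 0 < n * k := Nat.mul_pos (by omega) (by omega)
    omega
  -- decomposition
  have hoddd : ∀ v : V, Odd (G.degree v) := fun v => by rw [hdeg v]; exact hodd
  have hnevenF : Even (Fintype.card V) := by rwa [hncard]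
  obtain ⟨D, hD⟩ := AMagic.exists_goodD G hconn hoddd hnevenF
  -- sizes
  have hends_len : (AMagic.endsOf D).length = n := by
    have h1 : (AMagic.endsOf D).toFinset = Finset.univ := by
      ext v
      simp [hD.ends_cover v]
    rw [← List.toFinset_card_of_nodup hD.ends_nodup, h1, Finset.card_univ, hncard]
  have hDlen2 : 2 * D.length = n := by
    have h1 : (AMagic.endsOf D).length = ((D.map (fun t => [t.a, t.b])).map List.length).sum :=
      List.length_flatten
    rw [List.map_map] at h1
    have h2 : (D.map (List.length ∘ fun t => [t.a, t.b])) = D.map (fun _ => 2) := by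
      apply List.map_congr_left
      intro t _
      rfl
    rw [h2, List.map_const'] at h1
    rw [List.sum_replicate, smul_eq_mul] at h1
    omega
  have hes_len : (AMagic.edgesOf D).length = m := by
    have h1 : (AMagic.edgesOf D).toFinset = G.edgeFinset := by
      ext e
      rw [List.mem_toFinset, SimpleGraph.mem_edgeFinset]
      exact (hD.cover e).symm
    rw [← List.toFinset_card_of_nodup hD.nodup, h1]
  have hsum_len : (D.map (fun t => t.w.length)).sum = m := by
    have h1 : (AMagic.edgesOf D).length = ((D.map (fun t => t.w.edges)).map List.length).sum :=
      List.length_flatten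
    rw [List.map_map] at h1
    have h2 : (D.map (List.length ∘ fun t => t.w.edges)) = D.map (fun t => t.w.length) := by
      apply List.map_congr_left
      intro t _
      exact t.w.length_edges
    rw [h2] at h1
    omega
  have hsum_lenk : (D.map (fun t => t.w.length)).sum = D.length * k := by
    rw [hsum_len]
    have h3 : 2 * m = 2 * (D.length * k) := by
      calc 2 * m = n * k := hmk.symm
        _ = (2 * D.length) * k := by rw [hDlen2]
        _ = 2 * (D.length * k) := by ring
    omega
  -- pick a long trail
  obtain ⟨t₀, ht₀, hlong⟩ : ∃ t ∈ D, k ≤ t.w.length := by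
    by_contra hcon
    push_neg at hcon
    have hle : ∀ x ∈ D.map (fun t => t.w.length), x ≤ k - 1 := by
      intro x hx
      rw [List.mem_map] at hx
      obtain ⟨t, ht, rfl⟩ := hx
      have := hcon t ht
      omega
    have hDpos : 1 ≤ D.length := by omega
    have hB := List.sum_le_card_nsmul _ _ hle
    rw [List.length_map, smul_eq_mul, hsum_lenk] at hB
    have h4 : D.length * (k - 1) + D.length = D.length * k := by
      have h5 : D.length * ((k - 1) + 1) = D.length * (k - 1) + D.length * 1 := by ring
      have h6 : (k - 1) + 1 = k := by omega
      rw [h6] at h5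
      omega
    omega
  have hperm : D.Perm (t₀ :: D.erase t₀) := List.perm_cons_erase ht₀
  have hD' : AMagic.GoodD G (t₀ :: D.erase t₀) := AMagic.goodD_perm hperm hD
  have hkh : k = 2 * ((k - 1) / 2) + 1 := by
    obtain ⟨j, hj⟩ := hodd
    omega
  obtain ⟨f, hbij, hineq⟩ := AMagic.glue G k ((k - 1) / 2) m hdeg hkh hmdef.symm hm1
    t₀ (D.erase t₀) hD' (by omega)
  refine ⟨f, ?_, ?_⟩
  · rwa [hnk2]
  · intro u v
    rw [hnk2]
    exact hineq u v


/-- A connected `k`-regular graph on `n` vertices with `k ≥ 1` odd is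
`(nk/2 − 1)`-approximately magic. -/
theorem connected_odd_regular_approx_magic {V : Type} [Finite V] {n k : ℕ}
    (G : SimpleGraph V) (hn : Nat.card V = n)
    (hreg : ∀ v : V, Nat.card (G.neighborSet v) = k)
    (hk1 : 1 ≤ k) (hodd : Odd k) (hconn : G.Connected) :
    ∃ f : Sym2 V → ℕ,
      Set.BijOn f G.edgeSet (Set.Icc 1 (n * k / 2)) ∧
      ∀ u v : V, vertexSum G f u ≤ vertexSum G f v + (n * k / 2 - 1) := by
  obtain ⟨f, h1, h2⟩ := connected_odd_regular_approx_magic' G hn hreg hk1 hodd hconn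
  refine ⟨f, h1, fun u v => ?_⟩
  unfold vertexSum
  exact h2 u v
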